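/- Orthogonal error splitting in a truncated SVD sweep: suppose A⁽ᵖ⁾ = C⁽ᵖ⁾·(ΣVᵀ) + E where the columns of the unfolding of C⁽ᵖ⁾ are orthonormal and the unfolding of E is orthogonal to the column span of the unfolding of C⁽ᵖ⁾ (i.e., C⁽ᵖ⁾ᵀE = 0 in unfolded form). Then for any tensors X, Y of compatible sizes, ‖A⁽ᵖ⁾∘X − C⁽ᵖ⁾∘Y‖_F² = ‖E∘X‖_F² + ‖C⁽ᵖ⁾∘((ΣVᵀ·X) − Y)‖_F², where ∘ denotes contraction along the last/first mode. -/
import Mathlib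


open Matrix

/-- Squared Frobenius norm of a matrix. -/
def frobSq {I J : Type*} [Fintype I] [Fintype J] (A : Matrix I J ℝ) : ℝ :=
  ∑ i, ∑ j, (A i j) ^ 2

lemma frobSq_eq_trace {I J : Type*} [Fintype I] [Fintype J] [DecidableEq J]
    (A : Matrix I J ℝ) : frobSq A = (Aᵀ * A).trace := by
  unfold frobSq
  rw [Finset.sum_comm]
  simp [Matrix.trace, Matrix.mul_apply, Matrix.diag, sq]

/-- Orthogonal error splitting in a truncated SVD sweep
(unfolded form): if `Ap = C·M + E` where the columns of `C` are orthonormal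
(`CᵀC = I`, here `C` is the unfolding of the core `C⁽ᵖ⁾` and `M = ΣVᵀ`) and `E`
is orthogonal to the column span of `C` (`CᵀE = 0`), then for all compatible
`X`, `Y`:
`‖Ap·X − C·Y‖_F² = ‖E·X‖_F² + ‖C·(M·X − Y)‖_F²`. -/
theorem orthogonal_error_splitting
    (N s r q : ℕ)
    (Ap : Matrix (Fin N) (Fin s) ℝ)
    (C : Matrix (Fin N) (Fin r) ℝ)
    (M : Matrix (Fin r) (Fin s) ℝ)
    (E : Matrix (Fin N) (Fin s) ℝ)
    (hC : Cᵀ * C = 1) (hCE : Cᵀ * E = 0) (hAp : Ap = C * M + E)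
    (X : Matrix (Fin s) (Fin q) ℝ) (Y : Matrix (Fin r) (Fin q) ℝ) :
    frobSq (Ap * X - C * Y) = frobSq (E * X) + frobSq (C * (M * X - Y)) := by
  have hEC : Eᵀ * C = 0 := by
    have := congrArg Matrix.transpose hCE
    simpa [Matrix.transpose_mul] using this
  have key : Ap * X - C * Y = E * X + C * (M * X - Y) := by
    subst hAp
    simp only [Matrix.add_mul, Matrix.mul_sub, Matrix.mul_assoc]
    abel
  rw [key]
  rw [frobSq_eq_trace, frobSq_eq_trace, frobSq_eq_trace]
  have expand : ((E * X + C * (M * X - Y))ᵀ * (E * X + C * (M * X - Y)))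
      = (E * X)ᵀ * (E * X) + (C * (M * X - Y))ᵀ * (C * (M * X - Y))
        + (Xᵀ * (Eᵀ * C) * (M * X - Y) + (M * X - Y)ᵀ * (Cᵀ * E) * X) := by
    simp only [Matrix.transpose_add, Matrix.transpose_mul, Matrix.add_mul,
      Matrix.mul_add, Matrix.mul_assoc]
    abel
  rw [expand, hEC, hCE]
  simp [Matrix.trace_add]
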